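/- Let ν > 0, b ≥ 0, α > 0 with ν + 1 − b > α, and set μ = (ν + 1 − b − α)/α > 0. Let ω(x) = T_ν (1 + x²/ν)^{−(ν+1−b)/2} for x ∈ ℝ, where T_s = Γ((s+1)/2)/(√(sπ)·Γ(s/2)). Then ‖ω^{1/α}‖_{L_1(ℝ)}^α = T_ν·(√ν/(T_μ √μ))^α. -/

import Mathlib

open MeasureTheory Real Set
open scoped ENNReal

/-- The real Beta integral. -/
lemma my_real_beta {p q : ℝ} (hp : 0 < p) (hq : 0 < q) :
    ∫ u in (0:ℝ)..1, u ^ (p - 1) * (1 - u) ^ (q - 1)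
      = Real.Gamma p * Real.Gamma q / Real.Gamma (p + q) := by
  have hG : Real.Gamma (p + q) ≠ 0 := (Real.Gamma_pos_of_pos (by linarith)).ne'
  have hC := Complex.Gamma_mul_Gamma_eq_betaIntegral
    (s := (p : ℂ)) (t := (q : ℂ)) (by simpa using hp) (by simpa using hq)
  have hβ : Complex.betaIntegral p q
      = ((∫ u in (0:ℝ)..1, u ^ (p - 1) * (1 - u) ^ (q - 1) : ℝ) : ℂ) := by
    rw [Complex.betaIntegral, ← intervalIntegral.integral_ofReal]
    refine intervalIntegral.integral_congr fun x hx => ?_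
    rw [Set.uIcc_of_le (by norm_num : (0:ℝ) ≤ 1)] at hx
    have hx0 : (0:ℝ) ≤ x := hx.1
    have hx1 : (0:ℝ) ≤ 1 - x := by linarith [hx.2]
    push_cast
    rw [Complex.ofReal_cpow hx0, Complex.ofReal_cpow hx1]
    push_cast
    ring
  rw [hβ, show ((p:ℂ) + (q:ℂ)) = ((p + q : ℝ) : ℂ) by push_cast; ring,
    Complex.Gamma_ofReal, Complex.Gamma_ofReal, Complex.Gamma_ofReal,
    ← Complex.ofReal_mul, ← Complex.ofReal_mul] at hC
  have h2 : Real.Gamma p * Real.Gamma q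
      = Real.Gamma (p + q) * ∫ u in (0:ℝ)..1, u ^ (p - 1) * (1 - u) ^ (q - 1) := by
    exact_mod_cast hC
  rw [h2, mul_comm, mul_div_assoc, div_self hG, mul_one]

/-- The Beta integral over `Ioi 0` in the form `∫ t^(p-1) (1+t)^(-(p+q))`. -/
lemma my_beta_Ioi {p q : ℝ} (hp : 0 < p) (hq : 0 < q) :
    ∫ t in Ioi (0:ℝ), t ^ (p - 1) * (1 + t) ^ (-(p + q))
      = Real.Gamma p * Real.Gamma q / Real.Gamma (p + q) := by
  set f : ℝ → ℝ := fun u => u / (1 - u) with hf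
  set f' : ℝ → ℝ := fun u => ((1 - u) ^ 2)⁻¹ with hf'
  have himg : f '' Ioo 0 1 = Ioi (0:ℝ) := by
    ext t
    constructor
    · rintro ⟨u, ⟨hu0, hu1⟩, rfl⟩
      have : 0 < 1 - u := by linarith
      exact div_pos hu0 this
    · intro ht
      have ht' : (0:ℝ) < t := ht
      refine ⟨t / (1 + t), ⟨div_pos ht' (by linarith), ?_⟩, ?_⟩
      · rw [div_lt_one (by linarith)]; linarith
      · show t / (1 + t) / (1 - t / (1 + t)) = t
        have h1t : (1:ℝ) + t ≠ 0 := by positivity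
        field_simp; ring
  have hderiv : ∀ u ∈ Ioo (0:ℝ) 1, HasDerivWithinAt f (f' u) (Ioo 0 1) u := by
    intro u hu
    have hne : (1:ℝ) - u ≠ 0 := by
      have := hu.2; intro hcon; apply absurd this; linarith [sub_eq_zero.mp hcon]
    have hd : HasDerivAt f ((1 * (1 - u) - u * (0 - 1)) / (1 - u) ^ 2) u := by
      exact (hasDerivAt_id u).div ((hasDerivAt_const u (1:ℝ)).sub (hasDerivAt_id u)) hne
    have h2 : (1 * (1 - u) - u * (0 - 1)) / (1 - u) ^ 2 = f' u := by
      rw [hf']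
      field_simp; ring
    rw [h2] at hd
    exact hd.hasDerivWithinAt
  have hinj : InjOn f (Ioo 0 1) := by
    rintro u ⟨hu0, hu1⟩ v ⟨hv0, hv1⟩ huv
    have hu' : (1:ℝ) - u ≠ 0 := by intro hcon; linarith [sub_eq_zero.mp hcon]
    have hv' : (1:ℝ) - v ≠ 0 := by intro hcon; linarith [sub_eq_zero.mp hcon]
    have : u * (1 - v) = v * (1 - u) := by
      simp only [hf] at huv; rw [div_eq_div_iff hu' hv'] at huv
      linarith [huv]
    nlinarith [this]
  have key := integral_image_eq_integral_abs_deriv_smul (measurableSet_Ioo)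
    hderiv hinj (fun t => t ^ (p - 1) * (1 + t) ^ (-(p + q)))
  rw [himg] at key
  rw [key]
  have hcong : ∀ u ∈ Ioo (0:ℝ) 1,
      |f' u| • (f u ^ (p - 1) * (1 + f u) ^ (-(p + q)))
        = u ^ (p - 1) * (1 - u) ^ (q - 1) := by
    intro u hu
    obtain ⟨hu0, hu1⟩ := hu
    have h1u : (0:ℝ) < 1 - u := by linarith
    have h1f : 1 + f u = (1 - u)⁻¹ := by
      rw [hf]; field_simp; ring
    have hfu : f u ^ (p - 1) = u ^ (p - 1) * ((1 - u) ^ (p - 1))⁻¹ := by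
      rw [hf]
      rw [Real.div_rpow hu0.le h1u.le, div_eq_mul_inv]
    have hinv : ((1 - u)⁻¹ : ℝ) ^ (-(p + q)) = (1 - u) ^ (p + q) := by
      rw [← Real.rpow_neg_one (1 - u), ← Real.rpow_mul h1u.le]
      norm_num
    have habs : |f' u| = ((1 - u) ^ 2)⁻¹ := by
      rw [hf', abs_of_pos]; positivity
    rw [habs, smul_eq_mul, h1f, hfu, hinv]
    have hsq : ((1 - u):ℝ) ^ 2 = (1 - u) ^ (2:ℝ) := (Real.rpow_two _).symm
    have hsplit : ((1 - u):ℝ) ^ (p + q)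
        = (1 - u) ^ (p - 1) * ((1 - u) ^ (q - 1) * (1 - u) ^ (2:ℝ)) := by
      rw [← Real.rpow_add h1u, ← Real.rpow_add h1u]
      ring_nf
    rw [hsq, hsplit]
    have hp1 : ((1 - u):ℝ) ^ (p - 1) ≠ 0 := (Real.rpow_pos_of_pos h1u _).ne'
    have h2 : ((1 - u):ℝ) ^ (2:ℝ) ≠ 0 := (Real.rpow_pos_of_pos h1u _).ne'
    field_simp
  rw [setIntegral_congr_fun measurableSet_Ioo hcong]
  rw [← my_real_beta hp hq]
  rw [intervalIntegral.integral_of_le (by norm_num : (0:ℝ) ≤ 1),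
    ← integral_Ioc_eq_integral_Ioo]

/-- The half-line integral of `(1+x²)^(-s)`. -/
lemma my_int_Ioi {s : ℝ} (hs : 1 / 2 < s) :
    ∫ x in Ioi (0:ℝ), (1 + x ^ 2) ^ (-s)
      = Real.sqrt π * Real.Gamma (s - 1 / 2) / (2 * Real.Gamma s) := by
  set g : ℝ → ℝ := fun t => (1 / 2) * (t ^ (-(1/2) : ℝ) * (1 + t) ^ (-s)) with hg
  have h1 := integral_comp_rpow_Ioi_of_pos (g := g) (p := 2) zero_lt_two
  have hcong : ∀ x ∈ Ioi (0:ℝ),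
      (2 * x ^ ((2:ℝ) - 1)) • g (x ^ (2:ℝ)) = (1 + x ^ 2) ^ (-s) := by
    intro x hx
    have hx0 : (0:ℝ) < x := hx
    have hx2 : x ^ (2:ℝ) = x ^ 2 := Real.rpow_two x
    have hxm : ((x:ℝ) ^ 2) ^ (-(1/2) : ℝ) = x⁻¹ := by
      rw [← hx2, ← Real.rpow_mul hx0.le]
      norm_num [Real.rpow_neg_one]
    have h21 : x ^ ((2:ℝ) - 1) = x := by norm_num
    rw [hg, smul_eq_mul, hx2]
    show 2 * x ^ ((2:ℝ) - 1)
        * (1 / 2 * ((x ^ 2) ^ (-(1/2) : ℝ) * (1 + x ^ 2) ^ (-s))) = (1 + x ^ 2) ^ (-s)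
    rw [hxm, h21]
    field_simp
  rw [← setIntegral_congr_fun measurableSet_Ioi hcong, h1, hg]
  rw [integral_const_mul]
  have hbeta := my_beta_Ioi (p := 1/2) (q := s - 1/2) (by norm_num) (by linarith)
  have hpq : (1/2 : ℝ) + (s - 1/2) = s := by ring
  have hpm : (1/2 : ℝ) - 1 = -(1/2) := by norm_num
  rw [hpq, hpm] at hbeta
  rw [hbeta, Real.Gamma_one_half_eq]
  ring

/-- The full-line integral of `(1+x²)^(-s)`. -/
lemma my_int_real {s : ℝ} (hs : 1 / 2 < s) :
    ∫ x : ℝ, (1 + x ^ 2) ^ (-s)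
      = Real.sqrt π * Real.Gamma (s - 1 / 2) / Real.Gamma s := by
  have hG : Real.Gamma s ≠ 0 := (Real.Gamma_pos_of_pos (by linarith)).ne'
  calc ∫ x : ℝ, (1 + x ^ 2) ^ (-s)
      = ∫ x : ℝ, (fun t : ℝ => (1 + t ^ 2) ^ (-s)) |x| := by
        congr 1; funext x; simp [sq_abs]
    _ = 2 * ∫ x in Ioi (0:ℝ), (1 + x ^ 2) ^ (-s) :=
        integral_comp_abs (f := fun t : ℝ => (1 + t ^ 2) ^ (-s))
    _ = Real.sqrt π * Real.Gamma (s - 1 / 2) / Real.Gamma s := by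
        rw [my_int_Ioi hs]
        field_simp

/-- The normalizing constant `T_s = Γ((s+1)/2)/(√(sπ) Γ(s/2))` of the Student `t`-density. -/
noncomputable def studentConst (s : ℝ) : ℝ :=
  Real.Gamma ((s + 1) / 2) / (Real.sqrt (s * π) * Real.Gamma (s / 2))

lemma studentConst_pos {s : ℝ} (hs : 0 < s) : 0 < studentConst s := by
  unfold studentConst
  have h1 : 0 < Real.Gamma ((s + 1) / 2) := Real.Gamma_pos_of_pos (by linarith)
  have h2 : 0 < Real.Gamma (s / 2) := Real.Gamma_pos_of_pos (by linarith)
  have h3 : 0 < Real.sqrt (s * π) := Real.sqrt_pos.mpr (by positivity)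
  positivity

/-- For `ν > 0`, `b ≥ 0`, `0 < α < ν + 1 − b`, `μ = (ν + 1 − b − α)/α`, and the
weight `ω(x) = T_ν (1 + x²/ν)^{−(ν+1−b)/2}` arising from the Student `t`-density and
`ψ(x) = (1 + x²/ν)^{−b/2}`, one has `‖ω^{1/α}‖_{L₁(ℝ)}^α = T_ν (√ν/(T_μ √μ))^α`. -/
theorem stmt_19 (ν b α : ℝ) (hν : 0 < ν) (hb : 0 ≤ b) (hα : 0 < α)
    (h : α < ν + 1 - b) (μ : ℝ) (hμ : μ = (ν + 1 - b - α) / α)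
    (ω : ℝ → ℝ)
    (hω : ω = fun x : ℝ => studentConst ν * (1 + x ^ 2 / ν) ^ (-((ν + 1 - b) / 2))) :
    (∫ x : ℝ, ω x ^ (1 / α)) ^ α
      = studentConst ν * (Real.sqrt ν / (studentConst μ * Real.sqrt μ)) ^ α := by
  have hμ0 : 0 < μ := by
    rw [hμ]; apply div_pos (by linarith) hα
  have hTν : 0 < studentConst ν := studentConst_pos hν
  have hμ1 : μ + 1 = (ν + 1 - b) / α := by
    rw [hμ]; field_simp; ring
  set r : ℝ := (μ + 1) / 2 with hr
  have hr' : 1 / 2 < r := by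
    rw [hr]; nlinarith
  have hrm : r - 1 / 2 = μ / 2 := by rw [hr]; ring
  have hTμ : 0 < studentConst μ := studentConst_pos hμ0
  have hsμ : 0 < Real.sqrt μ := Real.sqrt_pos.mpr hμ0
  have hsν : 0 < Real.sqrt ν := Real.sqrt_pos.mpr hν
  have hsπ : 0 < Real.sqrt π := Real.sqrt_pos.mpr Real.pi_pos
  have hGμ2 : 0 < Real.Gamma (μ / 2) := Real.Gamma_pos_of_pos (by linarith)
  have hGr : 0 < Real.Gamma r := Real.Gamma_pos_of_pos (by linarith)
  -- Step 1: rewrite the integrand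
  have hintg : ∀ x : ℝ,
      ω x ^ (1 / α) = studentConst ν ^ (1 / α) * (1 + x ^ 2 / ν) ^ (-r) := by
    intro x
    have hB : (0:ℝ) < 1 + x ^ 2 / ν := by positivity
    rw [hω]
    rw [Real.mul_rpow hTν.le (Real.rpow_nonneg hB.le _)]
    congr 1
    rw [← Real.rpow_mul hB.le]
    congr 1
    rw [hr, hμ1]
    ring
  -- Step 2 & 3: compute the integral
  have hscale : ∀ x : ℝ,
      ((1:ℝ) + x ^ 2 / ν) ^ (-r)
        = (fun y : ℝ => (1 + y ^ 2) ^ (-r)) (x / Real.sqrt ν) := by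
    intro x
    show _ = ((1:ℝ) + (x / Real.sqrt ν) ^ 2) ^ (-r)
    rw [div_pow, Real.sq_sqrt hν.le]
  have hint : ∫ x : ℝ, ω x ^ (1 / α)
      = studentConst ν ^ (1 / α)
        * (Real.sqrt ν * (Real.sqrt π * Real.Gamma (r - 1 / 2) / Real.Gamma r)) := by
    simp_rw [hintg, hscale]
    rw [integral_const_mul, MeasureTheory.Measure.integral_comp_div
      (fun y : ℝ => (1 + y ^ 2) ^ (-r)) (Real.sqrt ν), my_int_real hr',
      abs_of_pos hsν, smul_eq_mul]
  -- the constant simplifies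
  have hK : Real.sqrt ν * (Real.sqrt π * Real.Gamma (r - 1 / 2) / Real.Gamma r)
      = Real.sqrt ν / (studentConst μ * Real.sqrt μ) := by
    rw [hrm]
    unfold studentConst
    rw [Real.sqrt_mul hμ0.le π]
    rw [show (μ + 1) / 2 = r from rfl]
    field_simp
  rw [hint, hK]
  have hKpos : 0 ≤ Real.sqrt ν / (studentConst μ * Real.sqrt μ) := by positivity
  rw [Real.mul_rpow (Real.rpow_nonneg hTν.le _) hKpos]
  congr 1
  rw [← Real.rpow_mul hTν.le, one_div_mul_cancel hα.ne', Real.rpow_one]
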